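/- There exist universal constants c₀ > 0 and C > 0 such that the following holds: for every ε ∈ (0, 1], every function f : ℝ → ℝ that is continuously differentiable with 1-Lipschitz derivative f', satisfies f ≥ 0 on ℝ, and f(0) = 1, and every integer N ≥ C/ε, if X_1, ..., X_N are independent random variables each uniformly distributed on the interval [0, 2/ε], then with probability at least 1/2 there exists i ∈ {1, ..., N} with f'(X_i) > -ε. -/

import Mathlib

open MeasureTheory Set

/-- The bad set where `deriv f ≤ -ε` inside `Ioc 0 (2/ε)` has measure at most `2/ε - 1/2`. -/
lemma bad_set_small (ε : ℝ) (hε0 : 0 < ε) (hε1 : ε ≤ 1) (f : ℝ → ℝ)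
    (hf : ContDiff ℝ 1 f) (hlip : LipschitzWith 1 (deriv f)) (hpos : ∀ x, 0 ≤ f x)
    (hf0 : f 0 = 1) :
    volume (deriv f ⁻¹' Iic (-ε) ∩ Ioc 0 (2 / ε)) ≤ ENNReal.ofReal (2 / ε - 1 / 2) := by
  set L : ℝ := 2 / ε with hLdef
  have hL2 : 2 ≤ L := by
    rw [hLdef, le_div_iff₀ hε0]; nlinarith
  have hLpos : 0 < L := by linarith
  have hεL : ε * L = 2 := by rw [hLdef, mul_div_assoc', mul_div_right_comm, div_self hε0.ne', one_mul]
  have hcont : Continuous (deriv f) := hlip.continuous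
  have hBm : MeasurableSet (deriv f ⁻¹' Iic (-ε) ∩ Ioc 0 L) :=
    ((hcont.measurable (measurableSet_Iic)).inter measurableSet_Ioc)
  set B : Set ℝ := deriv f ⁻¹' Iic (-ε) ∩ Ioc 0 L with hBdef
  by_cases hA : ∃ x₀ ∈ Icc (0 : ℝ) L, 1 < deriv f x₀
  · -- there's a point with large derivative; a half-interval around it is good
    obtain ⟨x₀, hx₀, hd⟩ := hA
    obtain ⟨a, ha0, haL, hax⟩ : ∃ a : ℝ, 0 ≤ a ∧ a + 1/2 ≤ L ∧ ∀ x ∈ Ioc a (a + 1/2), |x - x₀| ≤ 1/2 := by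
      by_cases hc : x₀ + 1/2 ≤ L
      · exact ⟨x₀, hx₀.1, hc, fun x hx => abs_le.2 ⟨by linarith [hx.1], by linarith [hx.2]⟩⟩
      · refine ⟨x₀ - 1/2, by linarith [hx₀.2], by linarith [hx₀.2], fun x hx => abs_le.2 ⟨by linarith [hx.1], by linarith [hx.2]⟩⟩
    have hgood : ∀ x ∈ Ioc a (a + 1/2), ¬ (deriv f x ≤ -ε) := by
      intro x hx hle
      have := hlip.dist_le_mul x x₀
      rw [NNReal.coe_one, one_mul] at this
      have h1 : |deriv f x - deriv f x₀| ≤ |x - x₀| := by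
        simpa [Real.dist_eq] using this
      have := abs_le.1 h1
      have := hax x hx
      have := abs_le.1 (hax x hx)
      nlinarith [this.1, (abs_le.1 h1).1]
    have hsub : B ⊆ Ioc 0 L \ Ioc a (a + 1/2) := by
      intro x hx
      refine ⟨hx.2, fun hxJ => hgood x hxJ hx.1⟩
    calc volume B ≤ volume (Ioc 0 L \ Ioc a (a + 1/2)) := measure_mono hsub
      _ = volume (Ioc 0 L) - volume (Ioc a (a + 1/2)) := by
          refine measure_diff ?_ measurableSet_Ioc.nullMeasurableSet (by simp)
          intro x hx; exact ⟨by linarith [hx.1], by linarith [hx.2]⟩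
      _ ≤ ENNReal.ofReal (L - 1/2) := by
          rw [Real.volume_Ioc, Real.volume_Ioc]
          rw [← ENNReal.ofReal_sub _ (by norm_num)]
          apply ENNReal.ofReal_le_ofReal; norm_num
  · -- derivative at most 1 on the whole interval: integral argument
    push_neg at hA
    have hdiff : ∀ x : ℝ, DifferentiableAt ℝ f x := fun x =>
      (hf.differentiable one_ne_zero).differentiableAt
    have hIntT : IntegrableOn (deriv f) (Ioc 0 L) volume :=
      (hcont.integrableOn_Icc (a := 0) (b := L)).mono_set Ioc_subset_Icc_self
    have hIntB : IntegrableOn (deriv f) B volume := hIntT.mono_set (fun x hx => hx.2)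
    have hIntG : IntegrableOn (deriv f) (Ioc 0 L \ B) volume :=
      hIntT.mono_set (fun x hx => hx.1)
    have hftc : ∫ y in (0:ℝ)..L, deriv f y = f L - f 0 :=
      intervalIntegral.integral_deriv_eq_sub (fun x _ => hdiff x)
        (hcont.intervalIntegrable 0 L)
    have hTset : ∫ y in Ioc 0 L, deriv f y = f L - 1 := by
      rw [← hf0, ← hftc, intervalIntegral.integral_of_le (le_of_lt hLpos)]
    have hsplit : (∫ y in Ioc 0 L ∩ B, deriv f y) + ∫ y in Ioc 0 L \ B, deriv f y
        = ∫ y in Ioc 0 L, deriv f y := integral_inter_add_diff hBm hIntT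
    have hTB : Ioc 0 L ∩ B = B := inter_eq_self_of_subset_right (fun x hx => hx.2)
    rw [hTB] at hsplit
    -- measures
    have hmsplit : volume (Ioc 0 L ∩ B) + volume (Ioc 0 L \ B) = volume (Ioc 0 L) :=
      measure_inter_add_diff _ hBm
    rw [hTB] at hmsplit
    have hBfin : volume B ≠ ⊤ := by
      refine ne_top_of_le_ne_top ?_ (measure_mono (fun x hx => hx.2 : B ⊆ Ioc 0 L))
      simp [Real.volume_Ioc]
    have hGfin : volume (Ioc 0 L \ B) ≠ ⊤ := by
      refine ne_top_of_le_ne_top ?_ (measure_mono (fun x hx => hx.1))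
      simp [Real.volume_Ioc]
    set b : ℝ := (volume B).toReal with hbdef
    set g : ℝ := (volume (Ioc 0 L \ B)).toReal with hgdef
    have hbg : b + g = L := by
      have := congrArg ENNReal.toReal hmsplit
      rwa [ENNReal.toReal_add hBfin hGfin, Real.volume_Ioc, sub_zero,
        ENNReal.toReal_ofReal (le_of_lt hLpos)] at this
    have hbnn : 0 ≤ b := ENNReal.toReal_nonneg
    have hgnn : 0 ≤ g := ENNReal.toReal_nonneg
    have hBint : ∫ y in B, deriv f y ≤ b * (-ε) := by
      have h := setIntegral_mono_on hIntB (integrableOn_const hBfin)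
        hBm (fun x hx => hx.1)
      rwa [setIntegral_const, smul_eq_mul] at h
    have hGint : ∫ y in Ioc 0 L \ B, deriv f y ≤ g * 1 := by
      have h := setIntegral_mono_on hIntG
        (integrableOn_const hGfin)
        (measurableSet_Ioc.diff hBm)
        (fun x hx => hA x ⟨le_of_lt hx.1.1, hx.1.2⟩)
      rwa [setIntegral_const, smul_eq_mul] at h
    have hfL : 0 ≤ f L := hpos L
    have hkey : -1 ≤ b * (-ε) + g := by
      have : f L - 1 ≤ b * (-ε) + g * 1 := by
        rw [← hTset, ← hsplit]; exact add_le_add hBint hGint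
      nlinarith
    have hble : b ≤ L - 1/2 := by nlinarith
    calc volume B = ENNReal.ofReal b := (ENNReal.ofReal_toReal hBfin).symm
      _ ≤ ENNReal.ofReal (L - 1/2) := ENNReal.ofReal_le_ofReal hble

theorem random_search_succeeds :
    ∃ c₀ C : ℝ, 0 < c₀ ∧ 0 < C ∧
      ∀ ε : ℝ, ε ∈ Set.Ioc (0 : ℝ) 1 →
        ∀ f : ℝ → ℝ, ContDiff ℝ 1 f → LipschitzWith 1 (deriv f) →
          (∀ x, 0 ≤ f x) → f 0 = 1 →
          ∀ N : ℕ, C / ε ≤ N →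
            ∀ (Ω : Type) [MeasurableSpace Ω] (μ : MeasureTheory.Measure Ω),
              MeasureTheory.IsProbabilityMeasure μ →
              ∀ X : Fin N → Ω → ℝ, (∀ i, Measurable (X i)) →
                ProbabilityTheory.iIndepFun X μ →
                (∀ i, MeasureTheory.Measure.map (X i) μ =
                  (MeasureTheory.volume (Set.Icc (0 : ℝ) (2 / ε)))⁻¹ •
                    MeasureTheory.volume.restrict (Set.Icc (0 : ℝ) (2 / ε))) →
                (1 : ENNReal) / 2 ≤ μ {ω : Ω | ∃ i : Fin N, -ε < deriv f (X i ω)} := by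
  refine ⟨1/2, 4, by norm_num, by norm_num, ?_⟩
  rintro ε ⟨hε0, hε1⟩ f hf hlip hpos hf0 N hN Ω _ μ hμ X hXm hindep hXd
  set L : ℝ := 2 / ε with hLdef
  have hLpos : 0 < L := by positivity
  have hcont : Continuous (deriv f) := hlip.continuous
  set Bfull : Set ℝ := deriv f ⁻¹' Iic (-ε) with hBf
  have hBfm : MeasurableSet Bfull := hcont.measurable measurableSet_Iic
  -- each sample lands in the bad set with probability at most 1 - ε/4
  have hmap : ∀ i, μ (X i ⁻¹' Bfull) ≤ ENNReal.ofReal (1 - ε/4) := by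
    intro i
    have h1 : μ (X i ⁻¹' Bfull) = Measure.map (X i) μ Bfull :=
      (Measure.map_apply (hXm i) hBfm).symm
    rw [h1, hXd i]
    simp only [Measure.smul_apply, Measure.restrict_apply hBfm, smul_eq_mul]
    have hsub : Bfull ∩ Icc 0 L ⊆ (Bfull ∩ Ioc 0 L) ∪ {0} := by
      rintro x ⟨hx1, hx2, hx3⟩
      rcases eq_or_lt_of_le hx2 with h | h
      · exact Or.inr (by simp [← h])
      · exact Or.inl ⟨hx1, h, hx3⟩
    have hbad : volume (Bfull ∩ Icc 0 L) ≤ ENNReal.ofReal (L - 1/2) := by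
      calc volume (Bfull ∩ Icc 0 L) ≤ volume ((Bfull ∩ Ioc 0 L) ∪ {0}) := measure_mono hsub
        _ ≤ volume (Bfull ∩ Ioc 0 L) + volume ({0} : Set ℝ) := measure_union_le _ _
        _ = volume (Bfull ∩ Ioc 0 L) := by simp
        _ ≤ ENNReal.ofReal (L - 1/2) := bad_set_small ε hε0 hε1 f hf hlip hpos hf0
    have hIccvol : volume (Icc (0:ℝ) L) = ENNReal.ofReal L := by
      rw [Real.volume_Icc, sub_zero]
    rw [hIccvol]
    calc (ENNReal.ofReal L)⁻¹ * volume (Bfull ∩ Icc 0 L)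
        ≤ (ENNReal.ofReal L)⁻¹ * ENNReal.ofReal (L - 1/2) :=
          mul_le_mul_right hbad _
      _ = ENNReal.ofReal ((L - 1/2) / L) := by
          rw [ENNReal.ofReal_div_of_pos hLpos, ENNReal.div_eq_inv_mul]
      _ = ENNReal.ofReal (1 - ε/4) := by
          congr 1
          rw [hLdef]
          field_simp
          ring
  -- the failure event
  have hEm : ∀ i, MeasurableSet (X i ⁻¹' Bfull) := fun i => (hXm i) hBfm
  have hprod : μ (⋂ i, X i ⁻¹' Bfull) = ∏ i, μ (X i ⁻¹' Bfull) :=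
    hindep.meas_iInter (fun i => ⟨Bfull, hBfm, rfl⟩)
  have hL2 : 2 ≤ L := by rw [hLdef, le_div_iff₀ hε0]; nlinarith
  have hfail : μ (⋂ i, X i ⁻¹' Bfull) ≤ 1/2 := by
    have hεN : 4 ≤ ε * N := by
      rw [div_le_iff₀ hε0] at hN; linarith [hN]
    have hr1 : (0:ℝ) ≤ 1 - ε/4 := by linarith
    have hr2 : (1 - ε/4 : ℝ) ≤ Real.exp (-(ε/4)) := by
      have := Real.add_one_le_exp (-(ε/4)); linarith
    have hr3 : (1 - ε/4 : ℝ)^N ≤ Real.exp (-(ε/4))^N := pow_le_pow_left₀ hr1 hr2 N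
    have hr4 : Real.exp (-(ε/4))^N = Real.exp (N * (-(ε/4))) := (Real.exp_nat_mul _ N).symm
    have hr5 : Real.exp ((N : ℝ) * (-(ε/4))) ≤ Real.exp (-1) := by
      apply Real.exp_le_exp.2
      have : (4:ℝ) ≤ ε * N := hεN
      nlinarith
    have hr6 : Real.exp (-1) ≤ 1/2 := by
      rw [Real.exp_neg]
      have h2 : (2:ℝ) ≤ Real.exp 1 := by
        have := Real.add_one_le_exp 1; linarith
      rw [one_div]
      exact inv_anti₀ (by norm_num) h2
    have hrN : (1 - ε/4 : ℝ)^N ≤ 1/2 := by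
      calc (1 - ε/4 : ℝ)^N ≤ Real.exp (-(ε/4))^N := hr3
        _ = Real.exp ((N:ℝ) * (-(ε/4))) := hr4
        _ ≤ Real.exp (-1) := hr5
        _ ≤ 1/2 := hr6
    calc μ (⋂ i, X i ⁻¹' Bfull) = ∏ i, μ (X i ⁻¹' Bfull) := hprod
      _ ≤ ∏ _i : Fin N, ENNReal.ofReal (1 - ε/4) :=
          Finset.prod_le_prod' (fun i _ => hmap i)
      _ = ENNReal.ofReal (1 - ε/4) ^ N := by
          rw [Finset.prod_const, Finset.card_univ, Fintype.card_fin]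
      _ = ENNReal.ofReal ((1 - ε/4)^N) := (ENNReal.ofReal_pow hr1 N).symm
      _ ≤ ENNReal.ofReal (1/2) := ENNReal.ofReal_le_ofReal hrN
      _ = 1/2 := by
          rw [ENNReal.ofReal_div_of_pos (by norm_num), ENNReal.ofReal_one,
            ENNReal.ofReal_ofNat]
  -- conclude
  have hset : {ω : Ω | ∃ i : Fin N, -ε < deriv f (X i ω)} = (⋂ i, X i ⁻¹' Bfull)ᶜ := by
    ext ω
    simp [hBf, not_le]
  rw [hset, prob_compl_eq_one_sub (MeasurableSet.iInter hEm)]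
  calc (1:ENNReal)/2 = 1 - 1/2 := by
        rw [one_div, ENNReal.one_sub_inv_two]
    _ ≤ 1 - μ (⋂ i, X i ⁻¹' Bfull) := tsub_le_tsub_left hfail 1
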